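/- arXiv:2003.11686 — 2 statements merged into one kernel-verified Lean document; each statement's English description precedes it below -/
import Mathlib

section
/- Let H be an n-vertex 3-graph in which every pair of distinct vertices has codegree either 0 or at least n/3. Then for every vertex v of H, the edges of H containing v lie in at most two tight components of H. -/
open Finset

variable {V : Type*} [DecidableEq V] [Fintype V]

/-- A tight path in a 3-graph `H`: a list of distinct vertices in which every 3
consecutive vertices form an edge of `H`. -/
def IsTightPath (H : Finset (Finset V)) (l : List V) : Prop :=
  l.Nodup ∧ ∀ (i : ℕ) (h : i + 2 < l.length),
    ({l[i]'(by omega), l[i + 1]'(by omega), l[i + 2]'(by omega)} : Finset V) ∈ H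

/-- The codegree of a pair of vertices. -/
def codeg (H : Finset (Finset V)) (u v : V) : ℕ :=
  (H.filter fun e => u ∈ e ∧ v ∈ e).card

/-- The first end of a tight path `v₁ v₂ ⋯ v_p`, i.e. the ordered pair `(v₂, v₁)`. -/
def firstEnd (l : List V) : Option (V × V) :=
  match l with
  | a :: b :: _ => some (b, a)
  | _ => none

/-- The last end of a tight path `v₁ v₂ ⋯ v_p`, i.e. the ordered pair `(v_{p-1}, v_p)`. -/
def lastEnd (l : List V) : Option (V × V) :=
  firstEnd l.reverse

/-- The set of vertices covered by a family of paths. -/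
def famVerts (Ps : List (List V)) : Finset V :=
  Ps.foldr (fun P s => P.toFinset ∪ s) ∅

/-- A family of pairwise vertex-disjoint tight paths. -/
def PathFamily (H : Finset (Finset V)) (Ps : List (List V)) : Prop :=
  (∀ P ∈ Ps, IsTightPath H P) ∧
  Ps.Pairwise fun P Q => Disjoint P.toFinset Q.toFinset

/-- Two families of paths have the same length and corresponding members have the same ends. -/
def SameEndsList (Ps Qs : List (List V)) : Prop :=
  Ps.length = Qs.length ∧ ∀ j < Ps.length,
    firstEnd (Ps.getD j []) = firstEnd (Qs.getD j []) ∧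
    lastEnd (Ps.getD j []) = lastEnd (Qs.getD j [])

/-- `u` and `v` are `(β, i)`-reachable in `H`. -/
def Reachable (H : Finset (Finset V)) (β : ℝ) (i : ℕ) (u v : V) : Prop :=
  β * (Fintype.card V : ℝ) ^ (5 * i - 1) ≤
    (({T : Finset V | T.card = 5 * i - 1 ∧
      ∃ Ps Qs : List (List V), Ps.length = i ∧
        (∀ P ∈ Ps, IsTightPath H P ∧ P.length = 5) ∧
        (∀ Q ∈ Qs, IsTightPath H Q ∧ Q.length = 5) ∧
        Ps.Pairwise (fun P P' => Disjoint P.toFinset P'.toFinset) ∧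
        Qs.Pairwise (fun Q Q' => Disjoint Q.toFinset Q'.toFinset) ∧
        famVerts Ps = insert u T ∧ famVerts Qs = insert v T ∧
        SameEndsList Ps Qs} : Set (Finset V)).ncard : ℝ)

/-- The set `Ñ_{β,i}(v)` of vertices `(β,i)`-reachable to `v`. -/
def reachSet (H : Finset (Finset V)) (β : ℝ) (i : ℕ) (v : V) : Set V :=
  {u | u ≠ v ∧ Reachable H β i u v}

/-- A vertex set is `(β, i)`-closed in `H`. -/
def IsClosedSet (H : Finset (Finset V)) (β : ℝ) (i : ℕ) (U : Finset V) : Prop :=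
  ∀ u ∈ U, ∀ v ∈ U, u ≠ v → Reachable H β i u v

/-- `Ps` is an `S`-absorber in `H`. -/
def IsAbsorber (H : Finset (Finset V)) (S : Finset V) (Ps : List (List V)) : Prop :=
  PathFamily H Ps ∧ Disjoint (famVerts Ps) S ∧
  ∃ Qs : List (List V), PathFamily H Qs ∧ famVerts Qs = famVerts Ps ∪ S ∧
    SameEndsList Ps Qs

/-- Two edges of `H` sharing exactly two vertices. -/
def EdgeAdj (H : Finset (Finset V)) (e f : Finset V) : Prop :=
  e ∈ H ∧ f ∈ H ∧ (e ∩ f).card = 2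

/-- Two edges lie in the same tight component: they are joined by a pseudo-path. -/
def SameTightComponent (H : Finset (Finset V)) (e f : Finset V) : Prop :=
  e ∈ H ∧ f ∈ H ∧ Relation.ReflTransGen (EdgeAdj H) e f

/-- `H` has at most two tight components: among any three edges two lie in a common
tight component. -/
def AtMostTwoTightComponents (H : Finset (Finset V)) : Prop :=
  ∀ e ∈ H, ∀ f ∈ H, ∀ g ∈ H,
    SameTightComponent H e f ∨ SameTightComponent H e g ∨ SameTightComponent H f g

/-- The number of edges of `H` containing the set `p`. -/
def degPair (H : Finset (Finset V)) (p : Finset V) : ℕ :=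
  (H.filter fun e => p ⊆ e).card

/-- `H` is `(μ, θ)`-dense: all but at most `θ * C(n,2)` pairs have codegree at least `μ n`. -/
def Dense3 (H : Finset (Finset V)) (μ θ : ℝ) : Prop :=
  (({p : Finset V | p.card = 2 ∧ (degPair H p : ℝ) < μ * Fintype.card V} :
      Set (Finset V)).ncard : ℝ) ≤ θ * ((Fintype.card V).choose 2)

/-- `H` is strongly `(μ, θ)`-dense. -/
def StronglyDense3 (H : Finset (Finset V)) (μ θ : ℝ) : Prop :=
  Dense3 H μ θ ∧ ∀ p : Finset V, p.card = 2 →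
    degPair H p = 0 ∨ μ * Fintype.card V ≤ (degPair H p : ℝ)

/-- A tight Hamilton cycle: a cyclic ordering of all vertices in which every 3
cyclically consecutive vertices form an edge. -/
def IsTightHamCycle (H : Finset (Finset V)) (l : List V) : Prop :=
  l.Nodup ∧ l.toFinset = Finset.univ ∧ 3 ≤ l.length ∧
  ∀ (i : ℕ) (h : i < l.length),
    ({l[i]'h, l[(i + 1) % l.length]'(Nat.mod_lt _ (by omega)),
      l[(i + 2) % l.length]'(Nat.mod_lt _ (by omega))} : Finset V) ∈ H

/-- `H ∗ K_t^{(3)}`: add `t` new vertices and all triples meeting them. -/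
def starK (H : Finset (Finset V)) (t : ℕ) : Finset (Finset (V ⊕ Fin t)) :=
  (Finset.univ : Finset (Finset (V ⊕ Fin t))).filter fun e =>
    e.card = 3 ∧ ((∃ x ∈ e, x.isRight = true) ∨ ∃ f ∈ H, e = f.image Sum.inl)

/-- The link of a vertex: the set of pairs forming an edge together with it. -/
def linkPairs (H : Finset (Finset V)) (u : V) : Set (Finset V) :=
  {p | p.card = 2 ∧ u ∉ p ∧ insert u p ∈ H}

lemma stc_trans {H : Finset (Finset V)} {e f g : Finset V}
    (h1 : SameTightComponent H e f) (h2 : SameTightComponent H f g) :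
    SameTightComponent H e g :=
  ⟨h1.1, h2.2.1, h1.2.2.trans h2.2.2⟩

lemma stc_symm {H : Finset (Finset V)} {e f : Finset V}
    (h : SameTightComponent H e f) : SameTightComponent H f e := by
  refine ⟨h.2.1, h.1, ?_⟩
  have hs : Symmetric (EdgeAdj H) := by
    intro a b hab
    exact ⟨hab.2.1, hab.1, by rw [Finset.inter_comm]; exact hab.2.2⟩
  haveI : Std.Symm (EdgeAdj H) := ⟨fun a b hab => hs hab⟩
  exact (Relation.ReflTransGen.symmetric : Std.Symm (Relation.ReflTransGen (EdgeAdj H))).symm _ _ h.2.2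

/-- Two edges of a 3-graph sharing two common vertices lie in the same tight component. -/
lemma same_comp_of_two_common {H : Finset (Finset V)} (h3 : ∀ e ∈ H, e.card = 3)
    {e f : Finset V} {v x : V} (he : e ∈ H) (hf : f ∈ H) (hve : v ∈ e) (hvf : v ∈ f)
    (hxe : x ∈ e) (hxf : x ∈ f) (hvx : v ≠ x) : SameTightComponent H e f := by
  refine ⟨he, hf, ?_⟩
  rcases eq_or_ne e f with rfl | hne
  · exact Relation.ReflTransGen.refl
  · refine Relation.ReflTransGen.single ⟨he, hf, ?_⟩
    have hsub : ({v, x} : Finset V) ⊆ e ∩ f := by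
      intro y hy
      simp only [mem_insert, mem_singleton] at hy
      rcases hy with rfl | rfl <;> simp [mem_inter, hve, hvf, hxe, hxf]
    have h2 : 2 ≤ (e ∩ f).card := by
      have hc : ({v, x} : Finset V).card = 2 := card_pair hvx
      have := card_le_card hsub
      omega
    have hle : (e ∩ f).card ≤ 3 :=
      le_trans (card_le_card inter_subset_left) (h3 e he).le
    have h3' : (e ∩ f).card ≠ 3 := by
      intro hc
      have he' : e ∩ f = e :=
        eq_of_subset_of_card_le inter_subset_left (by rw [h3 e he, hc])
      have hf' : e ∩ f = f :=
        eq_of_subset_of_card_le inter_subset_right (by rw [h3 f hf, hc])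
      exact hne (by rw [← he', hf'])
    omega

theorem statement18 (n : ℕ) (H : Finset (Finset (Fin n))) (h3 : ∀ e ∈ H, e.card = 3)
    (hdeg : ∀ u v : Fin n, u ≠ v → codeg H u v = 0 ∨ (n : ℝ) / 3 ≤ (codeg H u v : ℝ)) :
    ∀ v : Fin n, ∀ e ∈ H, ∀ f ∈ H, ∀ g ∈ H, v ∈ e → v ∈ f → v ∈ g →
      SameTightComponent H e f ∨ SameTightComponent H e g ∨
        SameTightComponent H f g := by
  intro v e he f hf g hg hve hvf hvg
  by_contra hcon
  push_neg at hcon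
  obtain ⟨hef, heg, hfg⟩ := hcon
  -- key: for every edge e ∋ v, there is a large set S of vertices ≠ v such that each
  -- x ∈ S lies in an edge through v and x in the tight component of e.
  have key : ∀ e' ∈ H, v ∈ e' → ∃ S : Finset (Fin n),
      ((n : ℝ) / 3 + 1 ≤ (S.card : ℝ)) ∧ (∀ x ∈ S, x ≠ v) ∧
      (∀ x ∈ S, ∃ h ∈ H, v ∈ h ∧ x ∈ h ∧ SameTightComponent H e' h) := by
    intro e' he' hve'
    have hcard3 : e'.card = 3 := h3 e' he'
    have hane : (e'.erase v).Nonempty := by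
      rw [← card_pos, card_erase_of_mem hve']
      omega
    obtain ⟨a, ha⟩ := hane
    have hav : a ≠ v := (mem_erase.1 ha).1
    have hae : a ∈ e' := (mem_erase.1 ha).2
    set Na : Finset (Fin n) :=
      univ.filter fun x => x ≠ v ∧ x ≠ a ∧ ({v, a, x} : Finset (Fin n)) ∈ H with hNa
    -- codeg H v a ≤ Na.card
    have hsubF : H.filter (fun h => v ∈ h ∧ a ∈ h) ⊆
        Na.image (fun x => ({v, a, x} : Finset (Fin n))) := by
      intro h hh
      rw [mem_filter] at hh
      obtain ⟨hhH, hvh, hah⟩ := hh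
      have hva : ({v, a} : Finset (Fin n)) ⊆ h := by
        intro y hy
        simp only [mem_insert, mem_singleton] at hy
        rcases hy with rfl | rfl <;> assumption
      have hcard1 : (h \ {v, a}).card = 1 := by
        rw [card_sdiff_of_subset hva, card_pair (Ne.symm hav), h3 h hhH]
      obtain ⟨x, hx⟩ := card_eq_one.mp hcard1
      have hxmem : x ∈ h ∧ x ∉ ({v, a} : Finset (Fin n)) := by
        have : x ∈ h \ ({v, a} : Finset (Fin n)) := by rw [hx]; exact mem_singleton_self x
        exact mem_sdiff.mp this
      have hxv : x ≠ v := by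
        intro hxv; exact hxmem.2 (by simp [hxv])
      have hxa : x ≠ a := by
        intro hxa; exact hxmem.2 (by simp [hxa])
      have hsub2 : ({v, a, x} : Finset (Fin n)) ⊆ h := by
        intro y hy
        simp only [mem_insert, mem_singleton] at hy
        rcases hy with rfl | rfl | rfl
        · exact hvh
        · exact hah
        · exact hxmem.1
      have hcvax : ({v, a, x} : Finset (Fin n)).card = 3 := by
        rw [card_insert_of_notMem (by simp [Ne.symm hav, Ne.symm hxv]),
          card_insert_of_notMem (by simp [Ne.symm hxa]), card_singleton]
      have hhe : ({v, a, x} : Finset (Fin n)) = h :=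
        eq_of_subset_of_card_le hsub2 (by rw [hcvax, h3 h hhH])
      refine mem_image.2 ⟨x, ?_, hhe⟩
      rw [hNa, mem_filter]
      exact ⟨mem_univ x, hxv, hxa, by rw [hhe]; exact hhH⟩
    have hcodegNa : codeg H v a ≤ Na.card := by
      calc codeg H v a ≤ (Na.image (fun x => ({v, a, x} : Finset (Fin n)))).card :=
            card_le_card hsubF
        _ ≤ Na.card := card_image_le
    have hcodeg_pos : codeg H v a ≠ 0 := by
      have : e' ∈ H.filter (fun h => v ∈ h ∧ a ∈ h) := mem_filter.2 ⟨he', hve', hae⟩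
      have := card_pos.2 ⟨e', this⟩
      unfold codeg
      omega
    have hcodeg : (n : ℝ) / 3 ≤ (codeg H v a : ℝ) := by
      rcases hdeg v a (Ne.symm hav) with h0 | h0
      · exact absurd h0 hcodeg_pos
      · exact h0
    have haNa : a ∉ Na := by
      rw [hNa, mem_filter]
      tauto
    refine ⟨insert a Na, ?_, ?_, ?_⟩
    · rw [card_insert_of_notMem haNa]
      push_cast
      have : (codeg H v a : ℝ) ≤ (Na.card : ℝ) := Nat.cast_le.mpr hcodegNa
      linarith
    · intro x hx
      rcases mem_insert.mp hx with rfl | hx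
      · exact hav
      · exact ((mem_filter.mp hx).2).1
    · intro x hx
      rcases mem_insert.mp hx with rfl | hx
      · exact ⟨e', he', hve', hae, he', he', Relation.ReflTransGen.refl⟩
      · obtain ⟨-, hxv, hxa, hxH⟩ := mem_filter.mp hx
        refine ⟨{v, a, x}, hxH, by simp, by simp, ?_⟩
        exact same_comp_of_two_common h3 he' hxH hve' (by simp) hae (by simp)
          (Ne.symm hav)
  obtain ⟨Se, hSe1, hSe2, hSe3⟩ := key e he hve
  obtain ⟨Sf, hSf1, hSf2, hSf3⟩ := key f hf hvf
  obtain ⟨Sg, hSg1, hSg2, hSg3⟩ := key g hg hvg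
  -- if two edges are in different components, their sets are disjoint
  have hdisj : ∀ (e' f' : Finset (Fin n)) (S T : Finset (Fin n)),
      (∀ x ∈ S, x ≠ v) →
      (∀ x ∈ S, ∃ h ∈ H, v ∈ h ∧ x ∈ h ∧ SameTightComponent H e' h) →
      (∀ x ∈ T, ∃ h ∈ H, v ∈ h ∧ x ∈ h ∧ SameTightComponent H f' h) →
      ¬SameTightComponent H e' f' → Disjoint S T := by
    intro e' f' S T hSv hS hT hnc
    rw [disjoint_left]
    intro x hxS hxT
    obtain ⟨h1, hh1, hv1, hx1, hc1⟩ := hS x hxS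
    obtain ⟨h2, hh2, hv2, hx2, hc2⟩ := hT x hxT
    have h12 : SameTightComponent H h1 h2 :=
      same_comp_of_two_common h3 hh1 hh2 hv1 hv2 hx1 hx2 (Ne.symm (hSv x hxS))
    exact hnc (stc_trans (stc_trans hc1 h12) (stc_symm hc2))
  have hdef : Disjoint Se Sf := hdisj e f Se Sf hSe2 hSe3 hSf3 hef
  have hdeg' : Disjoint Se Sg := hdisj e g Se Sg hSe2 hSe3 hSg3 heg
  have hdfg : Disjoint Sf Sg := hdisj f g Sf Sg hSf2 hSf3 hSg3 hfg
  -- the three disjoint sets lie in univ.erase v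
  have hsub : Se ∪ Sf ∪ Sg ⊆ univ.erase v := by
    intro x hx
    rw [mem_erase]
    refine ⟨?_, mem_univ x⟩
    rcases mem_union.mp hx with hx | hx
    · rcases mem_union.mp hx with hx | hx
      · exact hSe2 x hx
      · exact hSf2 x hx
    · exact hSg2 x hx
  have hcardsum : Se.card + Sf.card + Sg.card ≤ n - 1 := by
    have h1 : (Se ∪ Sf ∪ Sg).card = Se.card + Sf.card + Sg.card := by
      rw [card_union_of_disjoint (by
        rw [disjoint_union_left]; exact ⟨hdeg', hdfg⟩),
        card_union_of_disjoint hdef]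
    have h2 : (Se ∪ Sf ∪ Sg).card ≤ (univ.erase v).card := card_le_card hsub
    rw [card_erase_of_mem (mem_univ v), card_univ, Fintype.card_fin] at h2
    omega
  have hn1 : ((n - 1 : ℕ) : ℝ) ≤ (n : ℝ) := by
    have : (n - 1 : ℕ) ≤ n := Nat.sub_le n 1
    exact_mod_cast this
  have hcast : ((Se.card + Sf.card + Sg.card : ℕ) : ℝ) ≤ ((n - 1 : ℕ) : ℝ) :=
    Nat.cast_le.mpr hcardsum
  push_cast at hcast
  linarith
end

section
/- There exists β₀ > 0 such that for every 0 < β ≤ β₀ there exists n₀ ∈ ℕ such that the following holds for all n ≥ n₀. Let H be an n-vertex 3-graph and let 𝒮 be a family of 3-element subsets of V(H) such that for every S ∈ 𝒮 there are at least β⁴n³⁴/2 sets of 34 vertices of V(H) \ S, each being the vertex set of a family of pairwise vertex-disjoint tight paths that is an S-absorber in H. Then there exists a family ℱ of pairwise disjoint 34-element subsets of V(H) with |ℱ| ≤ β⁵n/34 such that every member of ℱ is the vertex set of a family of pairwise vertex-disjoint tight paths that is an S-absorber for some S ∈ 𝒮, and for every S ∈ 𝒮 at least β¹⁰n members of ℱ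 are disjoint from S and are vertex sets of S-absorbers. -/
open Finset

variable {V : Type*} [DecidableEq V] [Fintype V]

set_option linter.unusedSectionVars false

namespace Stmt19


variable {V : Type*} [DecidableEq V] [Fintype V]

/-- vertices used by a list of blocks -/
def used (l : List (Finset V)) : Finset V := l.foldr (· ∪ ·) ∅

lemma subset_used {A : Finset V} : ∀ {l : List (Finset V)}, A ∈ l → A ⊆ used l
  | B :: l, h => by
    rcases List.mem_cons.1 h with rfl | h
    · exact Finset.subset_union_left
    · exact (subset_used h).trans Finset.subset_union_right

/-- choices to extend a partial family -/
def ext (l : List (Finset V)) : Finset (Finset V) :=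
  (Finset.univ \ used l).powersetCard 34

lemma mem_ext {A : Finset V} {l : List (Finset V)} :
    A ∈ ext l ↔ A.card = 34 ∧ Disjoint A (used l) := by
  simp [ext, Finset.mem_powersetCard, Finset.subset_sdiff, and_comm]

/-- all families of `i` pairwise disjoint 34-sets, as lists -/
def Om (V : Type*) [DecidableEq V] [Fintype V] : ℕ → Finset (List (Finset V))
  | 0 => {[]}
  | (i+1) => (Om V i).biUnion fun l => (ext l).image (fun A => A :: l)

lemma om_spec : ∀ {i : ℕ} {l : List (Finset V)}, l ∈ Om V i →
    l.length = i ∧ (∀ A ∈ l, A.card = 34) ∧ l.Pairwise Disjoint ∧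
      (used l).card = 34 * i := by
  intro i
  induction i with
  | zero => intro l hl; simp only [Om, Finset.mem_singleton] at hl; subst hl
            simp [used]
  | succ i ih =>
    intro l' hl'
    simp only [Om, Finset.mem_biUnion, Finset.mem_image] at hl'
    obtain ⟨l, hl, A, hA, rfl⟩ := hl'
    obtain ⟨hAcard, hAdisj⟩ := mem_ext.1 hA
    obtain ⟨h1, h2, h3, h4⟩ := ih hl
    have husedcons : used (A :: l) = A ∪ used l := rfl
    refine ⟨by simp [h1], ?_, ?_, ?_⟩
    · intro B hB
      rcases List.mem_cons.1 hB with rfl | hB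
      · exact hAcard
      · exact h2 B hB
    · exact List.Pairwise.cons
        (fun B hB => hAdisj.mono_right (subset_used hB)) h3
    · rw [husedcons, Finset.card_union_of_disjoint hAdisj, hAcard, h4]; ring

lemma card_ext {i : ℕ} {l : List (Finset V)} (hl : l ∈ Om V i) :
    (ext l).card = (Fintype.card V - 34 * i).choose 34 := by
  rw [ext, Finset.card_powersetCard, Finset.card_sdiff_of_subset (Finset.subset_univ _),
    (om_spec hl).2.2.2, Finset.card_univ]

lemma om_card : ∀ i : ℕ,
    (Om V (i+1)).card = (Fintype.card V - 34 * i).choose 34 * (Om V i).card := by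
  intro i
  rw [Om, Finset.card_biUnion]
  · rw [Finset.sum_congr rfl (fun l hl => ?_), Finset.sum_const, smul_eq_mul,
      mul_comm]
    rw [Finset.card_image_of_injective _ (fun A B h => by injection h), card_ext hl]
  · intro l hl l' hl' hne
    simp only [Finset.disjoint_left, Finset.mem_image]
    rintro x ⟨A, hA, rfl⟩ ⟨B, hB, h⟩
    injection h with h1 h2
    exact hne h2.symm

lemma om_nonempty : ∀ {i : ℕ}, 34 * i ≤ Fintype.card V → (Om V i).Nonempty := by
  intro i
  induction i with
  | zero => intro _; exact ⟨[], by simp [Om]⟩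
  | succ i ih =>
    intro h
    obtain ⟨l, hl⟩ := ih (by omega)
    have hcard : 34 ≤ (Finset.univ \ used l).card := by
      rw [Finset.card_sdiff_of_subset (Finset.subset_univ _), (om_spec hl).2.2.2,
        Finset.card_univ]
      omega
    obtain ⟨A, hA, hAcard⟩ := Finset.exists_subset_card_eq hcard
    refine ⟨A :: l, ?_⟩
    simp only [Om, Finset.mem_biUnion, Finset.mem_image]
    exact ⟨l, hl, A, by rw [ext, Finset.mem_powersetCard]; exact ⟨hA, hAcard⟩, rfl⟩


/-- number of "bad" blocks -/
def bc (𝒜 : Finset (Finset V)) (l : List (Finset V)) : ℕ :=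
  l.countP (fun A => !decide (A ∈ 𝒜))

lemma mgf (𝒜 : Finset (Finset V)) (q L : ℝ) (hq0 : 0 ≤ q) (hq1 : q ≤ 1)
    (hL : 1 ≤ L) (m : ℕ)
    (hgood : ∀ i < m, ∀ l ∈ Om V i,
      q * (((Fintype.card V - 34 * i).choose 34 : ℕ) : ℝ) ≤
        (((ext l).filter (· ∈ 𝒜)).card : ℝ)) :
    ∀ i ≤ m, ∑ l ∈ Om V i, L ^ (bc 𝒜 l) ≤
      ((1 - q) * L + q) ^ i * ((Om V i).card : ℝ) := by
  intro i
  induction i with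
  | zero => intro _; simp [Om, bc]
  | succ i ih =>
    intro him
    have hi : i < m := by omega
    have hL0 : (0:ℝ) ≤ L := by linarith
    have hρ0 : (0:ℝ) ≤ (1 - q) * L + q := by nlinarith
    have hdisj : (↑(Om V i) : Set (List (Finset V))).PairwiseDisjoint
        (fun l => (ext l).image (fun A => A :: l)) := by
      intro l hl l' hl' hne
      simp only [Function.onFun, Finset.disjoint_left, Finset.mem_image]
      rintro x ⟨A, hA, rfl⟩ ⟨B, hB, h⟩
      injection h with h1 h2
      exact hne h2.symm
    have hinner : ∀ l ∈ Om V i,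
        ∑ x ∈ (ext l).image (fun A => A :: l), L ^ (bc 𝒜 x) ≤
          L ^ (bc 𝒜 l) * (((1 - q) * L + q) *
            (((Fintype.card V - 34 * i).choose 34 : ℕ) : ℝ)) := by
      intro l hl
      rw [Finset.sum_image (fun A _ B _ h => by injection h)]
      have hbc : ∀ A : Finset V, L ^ (bc 𝒜 (A :: l)) =
          L ^ (bc 𝒜 l) * (if A ∈ 𝒜 then 1 else L) := by
        intro A
        by_cases hA : A ∈ 𝒜 <;> simp [bc, List.countP_cons, hA, pow_succ]
      simp only [hbc, ← Finset.mul_sum]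
      have hsplit : ∑ A ∈ ext l, (if A ∈ 𝒜 then (1:ℝ) else L) =
          (((ext l).filter (· ∈ 𝒜)).card : ℝ) +
          (((ext l).filter (fun A => ¬ A ∈ 𝒜)).card : ℝ) * L := by
        rw [Finset.sum_ite, Finset.sum_const, Finset.sum_const]
        push_cast; ring
      rw [hsplit]
      have hadd : ((ext l).filter (· ∈ 𝒜)).card +
          ((ext l).filter (fun A => ¬ A ∈ 𝒜)).card = (ext l).card :=
        Finset.card_filter_add_card_filter_not _
      have hN := card_ext hl
      have hg := hgood i hi l hl
      have hpos : (0:ℝ) ≤ L ^ (bc 𝒜 l) := pow_nonneg hL0 _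
      have h2 : (((ext l).filter (· ∈ 𝒜)).card : ℝ) +
          (((ext l).filter (fun A => ¬ A ∈ 𝒜)).card : ℝ) * L ≤
          ((1 - q) * L + q) * (((Fintype.card V - 34 * i).choose 34 : ℕ) : ℝ) := by
        have hb : (((ext l).filter (fun A => ¬ A ∈ 𝒜)).card : ℝ) =
            (((Fintype.card V - 34 * i).choose 34 : ℕ) : ℝ) -
            (((ext l).filter (· ∈ 𝒜)).card : ℝ) := by
          rw [← hN, ← hadd]; push_cast; ring
        rw [hb]
        nlinarith [hg]
      exact mul_le_mul_of_nonneg_left h2 hpos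
    have hsum : ∑ l ∈ Om V (i+1), L ^ (bc 𝒜 l) =
        ∑ l ∈ Om V i, ∑ x ∈ (ext l).image (fun A => A :: l), L ^ (bc 𝒜 x) := by
      rw [Om, Finset.sum_biUnion hdisj]
    calc ∑ l ∈ Om V (i+1), L ^ (bc 𝒜 l)
        = ∑ l ∈ Om V i, ∑ x ∈ (ext l).image (fun A => A :: l), L ^ (bc 𝒜 x) :=
          hsum
      _ ≤ ∑ l ∈ Om V i, L ^ (bc 𝒜 l) * (((1 - q) * L + q) *
            (((Fintype.card V - 34 * i).choose 34 : ℕ) : ℝ)) :=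
          Finset.sum_le_sum hinner
      _ = (((1 - q) * L + q) * (((Fintype.card V - 34 * i).choose 34 : ℕ) : ℝ)) *
            ∑ l ∈ Om V i, L ^ (bc 𝒜 l) := by
          rw [← Finset.sum_mul, mul_comm]
      _ ≤ (((1 - q) * L + q) * (((Fintype.card V - 34 * i).choose 34 : ℕ) : ℝ)) *
            (((1 - q) * L + q) ^ i * ((Om V i).card : ℝ)) := by
          apply mul_le_mul_of_nonneg_left (ih (by omega))
          positivity
      _ = ((1 - q) * L + q) ^ (i+1) * (((Fintype.card V - 34 * i).choose 34 *
            (Om V i).card : ℕ) : ℝ) := by push_cast; ring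
      _ = ((1 - q) * L + q) ^ (i+1) * ((Om V (i+1)).card : ℝ) := by
          rw [om_card]


lemma good_lower (𝒜 : Finset (Finset V)) (h34 : ∀ A ∈ 𝒜, A.card = 34)
    (l : List (Finset V)) :
    (𝒜.card : ℝ) - ((used l).card : ℝ) * (((Fintype.card V - 1).choose 33 : ℕ) : ℝ)
      ≤ (((ext l).filter (· ∈ 𝒜)).card : ℝ) := by
  classical
  have h1 : 𝒜.filter (fun A => Disjoint A (used l)) ⊆ (ext l).filter (· ∈ 𝒜) := by
    intro A hA
    rw [Finset.mem_filter] at hA ⊢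
    exact ⟨mem_ext.2 ⟨h34 A hA.1, hA.2⟩, hA.1⟩
  have h2 : 𝒜.filter (fun A => ¬ Disjoint A (used l)) ⊆
      (used l).biUnion (fun u => 𝒜.filter (fun A => u ∈ A)) := by
    intro A hA
    rw [Finset.mem_filter] at hA
    obtain ⟨a, haA, haU⟩ := Finset.not_disjoint_iff.1 hA.2
    exact Finset.mem_biUnion.2 ⟨a, haU, Finset.mem_filter.2 ⟨hA.1, haA⟩⟩
  have h3 : ∀ u : V, (𝒜.filter (fun A => u ∈ A)).card ≤
      (Fintype.card V - 1).choose 33 := by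
    intro u
    have := Finset.card_le_card_of_injOn (fun A => A.erase u)
      (s := 𝒜.filter (fun A => u ∈ A))
      (t := (Finset.univ.erase u).powersetCard 33) ?_ ?_
    · rwa [Finset.card_powersetCard, Finset.card_erase_of_mem (Finset.mem_univ u),
        Finset.card_univ] at this
    · intro A hA
      rw [Finset.mem_coe, Finset.mem_filter] at hA
      rw [Finset.mem_coe, Finset.mem_powersetCard]
      beta_reduce
      constructor
      · exact fun x hx => Finset.mem_erase.2
          ⟨(Finset.mem_erase.1 hx).1, Finset.mem_univ x⟩
      · rw [Finset.card_erase_of_mem hA.2, h34 A hA.1]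
    · intro A hA B hB hAB
      simp only [Finset.coe_filter, Set.mem_setOf_eq] at hA hB
      rw [← Finset.insert_erase hA.2, ← Finset.insert_erase hB.2]
      simp only [] at hAB
      rw [hAB]
  have h4 : (𝒜.filter (fun A => ¬ Disjoint A (used l))).card ≤
      (used l).card * (Fintype.card V - 1).choose 33 := by
    calc (𝒜.filter (fun A => ¬ Disjoint A (used l))).card
        ≤ ((used l).biUnion (fun u => 𝒜.filter (fun A => u ∈ A))).card :=
          Finset.card_le_card h2
      _ ≤ ∑ u ∈ used l, (𝒜.filter (fun A => u ∈ A)).card := Finset.card_biUnion_le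
      _ ≤ (used l).card * (Fintype.card V - 1).choose 33 := by
          rw [Finset.card_eq_sum_ones (used l), Finset.sum_mul, one_mul]
          exact Finset.sum_le_sum fun u _ => h3 u
  have h5 := Finset.card_filter_add_card_filter_not
    (s := 𝒜) (fun A => Disjoint A (used l))
  have h6 : (𝒜.filter (fun A => Disjoint A (used l))).card ≤
      ((ext l).filter (· ∈ 𝒜)).card := Finset.card_le_card h1
  have h4' : ((𝒜.filter (fun A => ¬ Disjoint A (used l))).card : ℝ) ≤
      ((used l).card : ℝ) * (((Fintype.card V - 1).choose 33 : ℕ) : ℝ) := by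
    exact_mod_cast h4
  have h5' : ((𝒜.filter (fun A => Disjoint A (used l))).card : ℝ) +
      ((𝒜.filter (fun A => ¬ Disjoint A (used l))).card : ℝ) = (𝒜.card : ℝ) := by
    exact_mod_cast h5
  have h6' : ((𝒜.filter (fun A => Disjoint A (used l))).card : ℝ) ≤
      (((ext l).filter (· ∈ 𝒜)).card : ℝ) := by exact_mod_cast h6
  linarith

end Stmt19

open Stmt19

set_option maxHeartbeats 2000000 in
theorem statement19 :
    ∃ β₀ : ℝ, 0 < β₀ ∧ ∀ β : ℝ, 0 < β → β ≤ β₀ → ∃ n₀ : ℕ, ∀ n : ℕ, n₀ ≤ n →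
    ∀ H : Finset (Finset (Fin n)), (∀ e ∈ H, e.card = 3) →
    ∀ 𝒮 : Set (Finset (Fin n)), (∀ S ∈ 𝒮, S.card = 3) →
    (∀ S ∈ 𝒮, β ^ 4 * (n : ℝ) ^ 34 / 2 ≤
      (({A : Finset (Fin n) | Disjoint A S ∧ A.card = 34 ∧
          ∃ Ps : List (List (Fin n)), IsAbsorber H S Ps ∧ famVerts Ps = A} :
          Set (Finset (Fin n))).ncard : ℝ)) →
    ∃ ℱ : Finset (Finset (Fin n)),
      (∀ A ∈ ℱ, A.card = 34) ∧
      (∀ A ∈ ℱ, ∀ B ∈ ℱ, A ≠ B → Disjoint A B) ∧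
      ((ℱ.card : ℝ) ≤ β ^ 5 * n / 34) ∧
      (∀ A ∈ ℱ, ∃ S ∈ 𝒮, ∃ Ps : List (List (Fin n)), IsAbsorber H S Ps ∧ famVerts Ps = A) ∧
      (∀ S ∈ 𝒮, β ^ 10 * (n : ℝ) ≤
        (({A : Finset (Fin n) | A ∈ ℱ ∧ Disjoint A S ∧
            ∃ Ps : List (List (Fin n)), IsAbsorber H S Ps ∧ famVerts Ps = A} :
            Set (Finset (Fin n))).ncard : ℝ)) := by
  classical
  have hKnat : (5040 : ℕ) ≤ Nat.factorial 34 := by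
    calc (5040 : ℕ) = Nat.factorial 7 := by norm_num [Nat.factorial]
      _ ≤ Nat.factorial 34 := Nat.factorial_le (by norm_num)
  have hK33nat : (5040 : ℕ) ≤ Nat.factorial 33 := by
    calc (5040 : ℕ) = Nat.factorial 7 := by norm_num [Nat.factorial]
      _ ≤ Nat.factorial 33 := Nat.factorial_le (by norm_num)
  set K : ℝ := ((Nat.factorial 34 : ℕ) : ℝ) with hKdef
  set K33 : ℝ := ((Nat.factorial 33 : ℕ) : ℝ) with hK33def
  have hK5040 : (5040 : ℝ) ≤ K := by rw [hKdef]; exact_mod_cast hKnat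
  have hK33_5040 : (5040 : ℝ) ≤ K33 := by rw [hK33def]; exact_mod_cast hK33nat
  have hKK33 : K = 34 * K33 := by
    rw [hKdef, hK33def]
    have : Nat.factorial 34 = 34 * Nat.factorial 33 := rfl
    rw [this]; push_cast; ring
  have hK0 : (0:ℝ) < K := by linarith
  have hK330 : (0:ℝ) < K33 := by linarith
  refine ⟨K⁻¹, by positivity, ?_⟩
  intro β hβ0 hββ₀
  have hβtiny : β ≤ 1/5040 := le_trans hββ₀ (by
    rw [inv_le_comm₀ (by linarith) (by norm_num)]; linarith)
  have hβhalf : β ≤ 1/2 := by linarith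
  have hβ1 : β ≤ 1 := by linarith
  have hβK : K * β ≤ 1 := by
    calc K * β ≤ K * K⁻¹ := mul_le_mul_of_nonneg_left hββ₀ (le_of_lt hK0)
      _ = 1 := mul_inv_cancel₀ (ne_of_gt hK0)
  refine ⟨max (max ⌈(136:ℝ)/β^5⌉₊ ⌈((6528:ℝ)/(K*β^9))^2⌉₊)
    (max ⌈(1088:ℝ)*(1/β + K/8 + 1)/(K*β^9)⌉₊ 1), ?_⟩
  intro n hn H hH 𝒮 h𝒮3 habs
  have hn1 : 1 ≤ n := le_trans (le_max_of_le_right (le_max_right _ _)) hn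
  have hc1 : (136:ℝ)/β^5 ≤ (n:ℝ) := by
    have := le_trans (le_max_of_le_left (le_max_left _ _)) hn
    exact le_trans (Nat.le_ceil _) (by exact_mod_cast this)
  have hc2 : ((6528:ℝ)/(K*β^9))^2 ≤ (n:ℝ) := by
    have := le_trans (le_max_of_le_left (le_max_right _ _)) hn
    exact le_trans (Nat.le_ceil _) (by exact_mod_cast this)
  have hc3 : (1088:ℝ)*(1/β + K/8 + 1)/(K*β^9) ≤ (n:ℝ) := by
    have := le_trans (le_max_of_le_right (le_max_left _ _)) hn
    exact le_trans (Nat.le_ceil _) (by exact_mod_cast this)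
  have hn0 : (0:ℝ) < (n:ℝ) := by exact_mod_cast hn1
  -- main parameters
  set q : ℝ := K * β^4 / 4 with hqdef
  set L : ℝ := β⁻¹ with hLdef
  set m : ℕ := ⌊β^5 * (n:ℝ) / 34⌋₊ with hmdef
  set t : ℕ := ⌈β^10 * (n:ℝ)⌉₊ with htdef
  have hq0 : 0 ≤ q := by positivity
  have hq1 : q ≤ 1 := by
    have h1 : K * β^4 = (K * β) * β^3 := by ring
    have h3 : β^3 ≤ 1 := pow_le_one₀ (le_of_lt hβ0) hβ1
    have h4 : (0:ℝ) < β^3 := by positivity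
    rw [hqdef, h1]
    nlinarith
  have hL1 : 1 ≤ L := by
    rw [hLdef]
    exact (one_le_inv₀ hβ0).2 hβ1
  have hL0 : (0:ℝ) < L := by linarith
  have hLβ : L * β = 1 := inv_mul_cancel₀ (ne_of_gt hβ0)
  -- floor/ceil bounds
  have hm_le : (m:ℝ) ≤ β^5 * (n:ℝ) / 34 := Nat.floor_le (by positivity)
  have hm_gt : β^5 * (n:ℝ) / 34 - 1 < (m:ℝ) := Nat.sub_one_lt_floor _
  have ht_ge : β^10 * (n:ℝ) ≤ (t:ℝ) := Nat.le_ceil _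
  have ht_lt : (t:ℝ) < β^10 * (n:ℝ) + 1 := Nat.ceil_lt_add_one (by positivity)
  have hβ5n : (136:ℝ) ≤ β^5 * (n:ℝ) := by
    have : (136:ℝ) = (136/β^5) * β^5 := by field_simp
    nlinarith [pow_pos hβ0 5]
  have hβ5_small : β^5 ≤ 1/68 := by
    have h2 : β^5 ≤ β := by nlinarith [pow_pos hβ0 2, pow_pos hβ0 4, sq_nonneg (β^2 - β), sq_nonneg (β - β^2)]
    linarith
  have ht_le_m : t ≤ m := by
    have h1 : β^10 * (n:ℝ) = β^5 * (n:ℝ) * β^5 := by ring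
    have h2 : β^5 * (n:ℝ) * β^5 ≤ β^5 * (n:ℝ) * (1/68) := by
      apply mul_le_mul_of_nonneg_left hβ5_small (by positivity)
    have h3 : (t:ℝ) < (m:ℝ) + 1 := by
      have : β^5 * (n:ℝ) / 68 + 2 ≤ β^5 * (n:ℝ) / 34 := by linarith
      linarith
    exact_mod_cast Nat.lt_add_one_iff.mp (by exact_mod_cast h3)
  set s : ℕ := m - t with hsdef
  have hst : s + t = m := Nat.sub_add_cancel ht_le_m
  have hm34 : 34 * m ≤ n := by
    have : (34 * m : ℝ) ≤ β^5 * (n:ℝ) := by linarith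
    have hβ5le1 : β^5 ≤ 1 := by linarith
    have h2 : (34 * m : ℝ) ≤ (n:ℝ) := le_trans this (by nlinarith)
    exact_mod_cast h2
  have hcardV : Fintype.card (Fin n) = n := Fintype.card_fin n
  -- the absorber families
  set 𝒜 : Finset (Fin n) → Finset (Finset (Fin n)) := fun S =>
    (Set.toFinite {A : Finset (Fin n) | Disjoint A S ∧ A.card = 34 ∧
      ∃ Ps : List (List (Fin n)), IsAbsorber H S Ps ∧ famVerts Ps = A}).toFinset
    with h𝒜def
  have h𝒜mem : ∀ S A, A ∈ 𝒜 S ↔ (Disjoint A S ∧ A.card = 34 ∧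
      ∃ Ps : List (List (Fin n)), IsAbsorber H S Ps ∧ famVerts Ps = A) := by
    intro S A; rw [h𝒜def]; exact Set.Finite.mem_toFinset _
  have h𝒜card : ∀ S ∈ 𝒮, β^4 * (n:ℝ)^34 / 2 ≤ ((𝒜 S).card : ℝ) := by
    intro S hS
    have := habs S hS
    rwa [Set.ncard_eq_toFinset_card _ (Set.toFinite _)] at this
  -- the per-step good-extension bound
  have hgood : ∀ S ∈ 𝒮, ∀ i < m, ∀ l ∈ Om (Fin n) i,
      q * (((Fintype.card (Fin n) - 34 * i).choose 34 : ℕ) : ℝ) ≤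
        (((Stmt19.ext l).filter (· ∈ 𝒜 S)).card : ℝ) := by
    intro S hS i hi l hl
    have hA34 : ∀ A ∈ 𝒜 S, A.card = 34 := fun A hA => ((h𝒜mem S A).1 hA).2.1
    have hmain := good_lower (𝒜 S) hA34 l
    have hused : (used l).card = 34 * i := (om_spec hl).2.2.2
    set c1 : ℝ := (((Fintype.card (Fin n) - 34*i).choose 34 : ℕ) : ℝ) with hc1def
    set c2 : ℝ := (((Fintype.card (Fin n) - 1).choose 33 : ℕ) : ℝ) with hc2def
    have hc10 : (0:ℝ) ≤ c1 := by positivity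
    have hc20 : (0:ℝ) ≤ c2 := by positivity
    have hch1 : c1 * K ≤ (n:ℝ)^34 := by
      rw [hc1def, hKdef]
      have h1 : (Fintype.card (Fin n) - 34*i).choose 34 * Nat.factorial 34 ≤ n^34 := by
        rw [mul_comm, ← Nat.descFactorial_eq_factorial_mul_choose]
        calc (Fintype.card (Fin n) - 34*i).descFactorial 34
            ≤ (Fintype.card (Fin n) - 34*i)^34 := Nat.descFactorial_le_pow _ _
          _ ≤ n^34 := Nat.pow_le_pow_left (by rw [hcardV]; omega) 34
      exact_mod_cast h1
    have hch2 : c2 * K33 ≤ (n:ℝ)^33 := by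
      rw [hc2def, hK33def]
      have h1 : (Fintype.card (Fin n) - 1).choose 33 * Nat.factorial 33 ≤ n^33 := by
        rw [mul_comm, ← Nat.descFactorial_eq_factorial_mul_choose]
        calc (Fintype.card (Fin n) - 1).descFactorial 33
            ≤ (Fintype.card (Fin n) - 1)^33 := Nat.descFactorial_le_pow _ _
          _ ≤ n^33 := Nat.pow_le_pow_left (by rw [hcardV]; omega) 33
      exact_mod_cast h1
    have hAc := h𝒜card S hS
    have husedR : ((used l).card : ℝ) ≤ β^5 * (n:ℝ) := by
      have h1 : ((used l).card : ℝ) = 34 * (i:ℝ) := by rw [hused]; push_cast; ring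
      have h2 : (i:ℝ) ≤ (m:ℝ) := by exact_mod_cast le_of_lt hi
      linarith [hm_le]
    have key1 : q * c1 ≤ β^4 * (n:ℝ)^34 / 4 := by
      have h1 : q * c1 = (β^4/4) * (c1 * K) := by rw [hqdef]; ring
      rw [h1]
      have h2 : (β^4/4) * (c1*K) ≤ (β^4/4) * ((n:ℝ)^34) :=
        mul_le_mul_of_nonneg_left hch1 (by positivity)
      linarith
    have key2 : ((used l).card : ℝ) * c2 ≤ β^4 * (n:ℝ)^34 / 4 := by
      have h2 : c2 ≤ (n:ℝ)^33 / K33 := by rw [le_div_iff₀ hK330]; exact hch2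
      have h3 : ((used l).card : ℝ) * c2 ≤ (β^5 * (n:ℝ)) * ((n:ℝ)^33/K33) :=
        mul_le_mul husedR h2 hc20 (by positivity)
      have h4 : (β^5 * (n:ℝ)) * ((n:ℝ)^33/K33) = (β/K33) * (β^4 * (n:ℝ)^34) := by
        field_simp
      have h5 : (β/K33) * (β^4 * (n:ℝ)^34) ≤ (1/4) * (β^4 * (n:ℝ)^34) := by
        apply mul_le_mul_of_nonneg_right _ (by positivity)
        rw [div_le_iff₀ hK330]
        linarith
      linarith
    linarith [hmain, hAc, key1, key2]
  -- counting bad configurations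
  have hOmpos : 0 < (Om (Fin n) m).card := by
    rw [← hcardV] at hm34
    exact Finset.card_pos.2 (om_nonempty hm34)
  set ρ : ℝ := (1 - q) * L + q with hρdef
  have hρ0 : 0 ≤ ρ := by nlinarith
  have htail : ∀ S ∈ 𝒮, (((Om (Fin n) m).filter
      (fun l => s ≤ bc (𝒜 S) l)).card : ℝ) * L^s ≤ ρ^m * ((Om (Fin n) m).card : ℝ) := by
    intro S hS
    have hmgf := mgf (𝒜 S) q L hq0 hq1 hL1 m (hgood S hS) m le_rfl
    have h1 : (((Om (Fin n) m).filter (fun l => s ≤ bc (𝒜 S) l)).card : ℝ) * L^s =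
        ∑ _l ∈ (Om (Fin n) m).filter (fun l => s ≤ bc (𝒜 S) l), L^s := by
      rw [Finset.sum_const, nsmul_eq_mul]
    have h2 : ∑ l ∈ (Om (Fin n) m).filter (fun l => s ≤ bc (𝒜 S) l), (L:ℝ)^s ≤
        ∑ l ∈ (Om (Fin n) m).filter (fun l => s ≤ bc (𝒜 S) l), L^(bc (𝒜 S) l) := by
      apply Finset.sum_le_sum
      intro l hl
      exact pow_le_pow_right₀ hL1 (Finset.mem_filter.1 hl).2
    have h3 : ∑ l ∈ (Om (Fin n) m).filter (fun l => s ≤ bc (𝒜 S) l), (L:ℝ)^(bc (𝒜 S) l) ≤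
        ∑ l ∈ Om (Fin n) m, L^(bc (𝒜 S) l) :=
      Finset.sum_le_sum_of_subset_of_nonneg (Finset.filter_subset _ _)
        (fun _ _ _ => by positivity)
    rw [hρdef, h1]
    exact le_trans h2 (le_trans h3 hmgf)
  -- the key numeric inequality
  have hnum : ((n:ℝ))^3 * ρ^m < L^s := by
    set r : ℝ := 1 - q*(1-β) with hrdef
    have hr0 : (0:ℝ) ≤ r := by
      have hqb : (0:ℝ) ≤ q*β := mul_nonneg hq0 (le_of_lt hβ0)
      have hqe : q*(1-β) = q - q*β := by ring
      rw [hrdef]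
      linarith only [hqb, hqe, hq1]
    have hρr : ρ = L * r := by
      have h1 : L * (q*β) = q := by
        rw [show L * (q*β) = q * (L*β) by ring, hLβ, mul_one]
      rw [hρdef, hrdef]
      linear_combination -h1
    have hρm : ρ^m = L^m * r^m := by rw [hρr, mul_pow]
    have hu2' : L + K/8 + 1 ≤ K*β^9*(n:ℝ)/1088 := by
      have hKb9 : (0:ℝ) < K*β^9 := by positivity
      rw [div_le_iff₀ hKb9] at hc3
      have hLdiv : L = 1/β := by rw [hLdef, one_div]
      rw [hLdiv]
      linarith only [hc3]
    -- reduce to an inequality of the form n^3 * r^m < β^t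
    suffices hkey : (n:ℝ)^3 * r^m < β^t by
      have hLm : (0:ℝ) < L^m := pow_pos hL0 m
      have hLsEq : L^s = L^m * β^t := by
        have h1 : L^t * β^t = 1 := by rw [← mul_pow, hLβ, one_pow]
        have h2 : L^s * (L^t * β^t) = L^m * β^t := by
          rw [← mul_assoc, ← pow_add, hst]
        rw [h1, mul_one] at h2
        exact h2
      rw [hLsEq, hρm]
      calc (n:ℝ)^3 * (L^m * r^m) = L^m * ((n:ℝ)^3 * r^m) := by ring
        _ < L^m * β^t := mul_lt_mul_of_pos_left hkey hLm
    -- exponential estimates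
    have hexp1 : r ≤ Real.exp (-(q*(1-β))) := by
      have := Real.add_one_le_exp (-(q*(1-β)))
      rw [hrdef]
      linarith only [this]
    have hexp2 : r^m ≤ Real.exp (-(q*(1-β)))^m := pow_le_pow_left₀ hr0 hexp1 m
    have hexp3 : Real.exp (-(q*(1-β)))^m = Real.exp ((m:ℝ) * (-(q*(1-β)))) :=
      (Real.exp_nat_mul _ m).symm
    have hn3 : (n:ℝ)^3 = Real.exp ((3:ℕ) * Real.log n) := by
      rw [Real.exp_nat_mul, Real.exp_log hn0]
    have hβtexp : β^t = Real.exp ((t:ℝ) * Real.log β) := by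
      rw [Real.exp_nat_mul, Real.exp_log hβ0]
    -- auxiliary bounds
    have hlogL0 : 0 ≤ Real.log L := Real.log_nonneg hL1
    have hlogLL : Real.log L ≤ L := by
      have := Real.log_le_sub_one_of_pos hL0
      linarith only [this]
    have hloginv : Real.log L = -Real.log β := by rw [hLdef, Real.log_inv]
    have htlogL : (t:ℝ) * Real.log L ≤ β^9*(n:ℝ) + L := by
      have h0 : (0:ℝ) ≤ (t:ℝ) := Nat.cast_nonneg t
      have h1 : (t:ℝ) * Real.log L ≤ (β^10*(n:ℝ) + 1) * L :=
        mul_le_mul (le_of_lt ht_lt) hlogLL hlogL0 (by positivity)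
      have h2 : (β^10*(n:ℝ) + 1) * L = β^9*(n:ℝ)*(L*β) + L := by ring
      rw [h2, hLβ, mul_one] at h1
      exact h1
    have hsqrtn : Real.sqrt n * Real.sqrt n = (n:ℝ) :=
      Real.mul_self_sqrt (le_of_lt hn0)
    have hlogn : Real.log n ≤ 2 * Real.sqrt n := by
      have h1 : Real.log n = 2 * Real.log (Real.sqrt n) := by
        rw [Real.log_sqrt (le_of_lt hn0)]; ring
      have h2 : Real.log (Real.sqrt n) ≤ Real.sqrt n := by
        have h3 := Real.log_le_sub_one_of_pos (Real.sqrt_pos.2 hn0)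
        linarith only [h3]
      linarith only [h1, h2]
    set u : ℝ := K*β^9*(n:ℝ)/1088 with hudef
    have hKb9 : (0:ℝ) < K*β^9 := by positivity
    have hu1 : 6 * Real.sqrt n ≤ u := by
      have hsq : 6528/(K*β^9) ≤ Real.sqrt n := by
        have h0 : (0:ℝ) ≤ 6528/(K*β^9) := by positivity
        calc 6528/(K*β^9) = Real.sqrt ((6528/(K*β^9))^2) := (Real.sqrt_sq h0).symm
          _ ≤ Real.sqrt n := Real.sqrt_le_sqrt hc2
      rw [div_le_iff₀ hKb9] at hsq
      have h5 : 6528 * Real.sqrt n ≤ (Real.sqrt n * (K*β^9)) * Real.sqrt n :=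
        mul_le_mul_of_nonneg_right hsq (Real.sqrt_nonneg n)
      have h6 : (Real.sqrt n * (K*β^9)) * Real.sqrt n = K*β^9*(n:ℝ) := by
        rw [show (Real.sqrt n * (K*β^9)) * Real.sqrt n
            = (Real.sqrt n * Real.sqrt n) * (K*β^9) by ring, hsqrtn]; ring
      rw [h6] at h5
      rw [hudef]
      linear_combination h5 / 1088
    have hu2 : L + K/8 + 1 ≤ u := hu2'
    have hu3 : β^9*(n:ℝ) ≤ u := by
      rw [hudef]
      have h1 : (0:ℝ) ≤ β^9*(n:ℝ) := by positivity
      have h2 : (0:ℝ) ≤ (K - 1088) * (β^9*(n:ℝ)) := mul_nonneg (by linarith) h1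
      have h3 : (K - 1088) * (β^9*(n:ℝ)) = K*β^9*(n:ℝ) - 1088*(β^9*(n:ℝ)) := by ring
      linear_combination h2 / 1088
    have hqm : 4*u - K/8 ≤ q*(1-β)*(m:ℝ) := by
      have hm0 : (0:ℝ) ≤ (m:ℝ) := Nat.cast_nonneg m
      have e1 : (q/2)*(m:ℝ) ≤ q*(1-β)*(m:ℝ) := by
        have h1 : (0:ℝ) ≤ q*(m:ℝ)*(1/2 - β) :=
          mul_nonneg (mul_nonneg hq0 hm0) (by linarith only [hβhalf])
        have h2 : q*(1-β)*(m:ℝ) - (q/2)*(m:ℝ) = q*(m:ℝ)*(1/2 - β) := by ring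
        linarith only [h1, h2]
      have e2 : (q/2)*(β^5*(n:ℝ)/34 - 1) ≤ (q/2)*(m:ℝ) :=
        mul_le_mul_of_nonneg_left (le_of_lt hm_gt) (by positivity)
      have e3 : (q/2)*(β^5*(n:ℝ)/34 - 1) = 4*u - q/2 := by
        rw [hqdef, hudef]; ring
      have e4 : q/2 ≤ K/8 := by
        have hβ4 : β^4 ≤ 1 := pow_le_one₀ (le_of_lt hβ0) hβ1
        have h2 : (0:ℝ) ≤ K*(1 - β^4) := mul_nonneg (le_of_lt hK0) (by linarith)
        have h3 : K*(1 - β^4) = K - K*β^4 := by ring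
        rw [hqdef]
        linear_combination h2 / 8
      linarith only [e1, e2, e3, e4]
    -- the exponent inequality
    have hmain : ((3:ℕ):ℝ) * Real.log n + (m:ℝ) * (-(q*(1-β))) < (t:ℝ) * Real.log β := by
      have h1 : (t:ℝ) * Real.log β = -((t:ℝ) * Real.log L) := by
        rw [hloginv]; ring
      rw [h1]
      push_cast
      linarith only [hqm, htlogL, hlogn, hu1, hu2, hu3, hL0, hK0]
    calc (n:ℝ)^3 * r^m ≤ (n:ℝ)^3 * Real.exp ((m:ℝ) * (-(q*(1-β)))) := by
          rw [← hexp3]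
          exact mul_le_mul_of_nonneg_left hexp2 (by positivity)
      _ = Real.exp (((3:ℕ):ℝ) * Real.log n + (m:ℝ) * (-(q*(1-β)))) := by
          rw [Real.exp_add, hn3]
      _ < Real.exp ((t:ℝ) * Real.log β) := Real.exp_lt_exp.2 hmain
      _ = β^t := hβtexp.symm
  -- union bound and choice of a good configuration
  obtain ⟨l, hlOm, hlgood⟩ : ∃ l ∈ Om (Fin n) m, ∀ S ∈ 𝒮, bc (𝒜 S) l < s := by
    set 𝒮fin : Finset (Finset (Fin n)) := (Set.toFinite 𝒮).toFinset with h𝒮findef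
    have h𝒮mem : ∀ S, S ∈ 𝒮fin ↔ S ∈ 𝒮 := fun S => Set.Finite.mem_toFinset _
    have h𝒮card : ((𝒮fin.card : ℕ) : ℝ) ≤ (n:ℝ)^3 := by
      have h1 : 𝒮fin ⊆ Finset.univ.powersetCard 3 := by
        intro S hSf
        rw [Finset.mem_powersetCard]
        exact ⟨Finset.subset_univ _, h𝒮3 S ((h𝒮mem S).1 hSf)⟩
      have h2 : 𝒮fin.card ≤ (Finset.univ.powersetCard 3).card := Finset.card_le_card h1
      rw [Finset.card_powersetCard, Finset.card_univ, hcardV] at h2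
      have h3 : n.choose 3 ≤ n^3 := by
        have h4 : n.choose 3 ≤ n.descFactorial 3 := by
          rw [Nat.descFactorial_eq_factorial_mul_choose]
          exact Nat.le_mul_of_pos_left _ (by norm_num [Nat.factorial])
        exact le_trans h4 (Nat.descFactorial_le_pow n 3)
      have h5 : 𝒮fin.card ≤ n^3 := le_trans h2 h3
      exact_mod_cast h5
    set Bad : Finset (Fin n) → Finset (List (Finset (Fin n))) :=
      fun S => (Om (Fin n) m).filter (fun l => s ≤ bc (𝒜 S) l) with hBaddef
    have hΩpos : (0:ℝ) < ((Om (Fin n) m).card : ℝ) := by exact_mod_cast hOmpos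
    have hLs : (0:ℝ) < L^s := pow_pos hL0 s
    have hsum : ∑ S ∈ 𝒮fin, ((Bad S).card:ℝ) < ((Om (Fin n) m).card : ℝ) := by
      have hEach : ∀ S ∈ 𝒮fin, ((Bad S).card : ℝ) ≤
          ρ^m * ((Om (Fin n) m).card:ℝ) / L^s := by
        intro S hSf
        rw [le_div_iff₀ hLs]
        exact htail S ((h𝒮mem S).1 hSf)
      have h7 : (n:ℝ)^3*(ρ^m*((Om (Fin n) m).card:ℝ)/L^s) =
          ((n:ℝ)^3*ρ^m)*(((Om (Fin n) m).card:ℝ)/L^s) := by ring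
      have h8 : ((n:ℝ)^3*ρ^m)*(((Om (Fin n) m).card:ℝ)/L^s) <
          L^s*(((Om (Fin n) m).card:ℝ)/L^s) :=
        mul_lt_mul_of_pos_right hnum (by positivity)
      have h9 : L^s*(((Om (Fin n) m).card:ℝ)/L^s) = ((Om (Fin n) m).card:ℝ) := by
        field_simp
      calc ∑ S ∈ 𝒮fin, ((Bad S).card:ℝ)
          ≤ ∑ _S ∈ 𝒮fin, ρ^m * ((Om (Fin n) m).card:ℝ)/L^s := Finset.sum_le_sum hEach
        _ = (𝒮fin.card:ℝ) * (ρ^m*((Om (Fin n) m).card:ℝ)/L^s) := by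
            rw [Finset.sum_const, nsmul_eq_mul]
        _ ≤ (n:ℝ)^3 * (ρ^m*((Om (Fin n) m).card:ℝ)/L^s) :=
            mul_le_mul_of_nonneg_right h𝒮card (by positivity)
        _ < ((Om (Fin n) m).card:ℝ) := by rw [h7]; linarith only [h8, h9]
    by_contra hcon
    push_neg at hcon
    have hOmsub : Om (Fin n) m ⊆ 𝒮fin.biUnion Bad := by
      intro l hl
      obtain ⟨S, hSmem, hbc⟩ := hcon l hl
      exact Finset.mem_biUnion.2 ⟨S, (h𝒮mem S).2 hSmem,
        Finset.mem_filter.2 ⟨hl, hbc⟩⟩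
    have h1 : (Om (Fin n) m).card ≤ ∑ S ∈ 𝒮fin, (Bad S).card :=
      le_trans (Finset.card_le_card hOmsub) Finset.card_biUnion_le
    have h2 : ((Om (Fin n) m).card : ℝ) ≤ ∑ S ∈ 𝒮fin, ((Bad S).card : ℝ) := by
      exact_mod_cast h1
    linarith only [h2, hsum]
  -- construct the family
  obtain ⟨hlen, hl34, hldisj, -⟩ := om_spec hlOm
  have hlnodup : l.Nodup := by
    have : l.Pairwise (· ≠ ·) := by
      refine List.Pairwise.imp_of_mem ?_ hldisj
      intro A B hA hB hAB heq
      rw [heq] at hAB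
      have hBe : B = ∅ := disjoint_self.1 hAB
      have h34b := hl34 B hB
      rw [hBe] at h34b
      simp at h34b
    exact this
  refine ⟨l.toFinset.filter (fun A => ∃ S ∈ 𝒮, Disjoint A S ∧ A.card = 34 ∧
    ∃ Ps : List (List (Fin n)), IsAbsorber H S Ps ∧ famVerts Ps = A), ?_, ?_, ?_, ?_, ?_⟩
  · intro A hA
    exact hl34 A (List.mem_toFinset.1 (Finset.mem_filter.1 hA).1)
  · intro A hA B hB hAB
    haveI : Std.Symm (α := Finset (Fin n)) Disjoint := ⟨fun X Y h => h.symm⟩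
    exact List.Pairwise.forall hldisj
      (List.mem_toFinset.1 (Finset.mem_filter.1 hA).1)
      (List.mem_toFinset.1 (Finset.mem_filter.1 hB).1) hAB
  · calc ((l.toFinset.filter _).card : ℝ) ≤ (l.toFinset.card : ℝ) := by
          exact_mod_cast Finset.card_le_card (Finset.filter_subset _ _)
      _ = (l.length : ℝ) := by rw [List.toFinset_card_of_nodup hlnodup]
      _ ≤ β^5 * n / 34 := by rw [hlen]; exact hm_le
  · intro A hA
    obtain ⟨S, hS, h1, h2, h3⟩ := (Finset.mem_filter.1 hA).2
    exact ⟨S, hS, h3⟩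
  · intro S hS
    have hSbc : bc (𝒜 S) l < s := hlgood S hS
    set p : Finset (Fin n) → Bool := fun A => decide (A ∈ 𝒜 S) with hpdef
    have hcount : l.countP p + bc (𝒜 S) l = m := by
      have hfun : (fun a => decide ¬(p a = true)) =
          (fun A : Finset (Fin n) => !decide (A ∈ 𝒜 S)) := by
        funext a; simp [hpdef]
      have h1 := List.length_eq_countP_add_countP (p := p) (l := l)
      rw [hlen, hfun] at h1
      unfold Stmt19.bc
      omega
    have hgoodcount : t < l.countP p := by omega
    set G : Finset (Finset (Fin n)) := (l.filter p).toFinset with hGdef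
    have hGcard : t < G.card := by
      rw [hGdef, List.toFinset_card_of_nodup (hlnodup.filter p),
        ← List.countP_eq_length_filter]
      exact hgoodcount
    have hGsub : (↑G : Set (Finset (Fin n))) ⊆
        {A : Finset (Fin n) | A ∈ l.toFinset.filter (fun A => ∃ S ∈ 𝒮, Disjoint A S ∧
            A.card = 34 ∧ ∃ Ps : List (List (Fin n)), IsAbsorber H S Ps ∧ famVerts Ps = A) ∧
          Disjoint A S ∧
          ∃ Ps : List (List (Fin n)), IsAbsorber H S Ps ∧ famVerts Ps = A} := by
      intro A hA
      rw [hGdef] at hA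
      simp only [List.coe_toFinset, Set.mem_setOf_eq, List.mem_filter] at hA
      obtain ⟨hAl, hAp⟩ := hA
      have hA𝒜 : A ∈ 𝒜 S := by
        rw [hpdef] at hAp
        exact of_decide_eq_true hAp
      obtain ⟨hd, h34, hPs⟩ := (h𝒜mem S A).1 hA𝒜
      refine ⟨Finset.mem_filter.2 ⟨List.mem_toFinset.2 hAl, S, hS, hd, h34, hPs⟩, hd, hPs⟩
    have hfin : Set.Finite {A : Finset (Fin n) | A ∈ l.toFinset.filter (fun A => ∃ S ∈ 𝒮, Disjoint A S ∧
            A.card = 34 ∧ ∃ Ps : List (List (Fin n)), IsAbsorber H S Ps ∧ famVerts Ps = A) ∧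
          Disjoint A S ∧
          ∃ Ps : List (List (Fin n)), IsAbsorber H S Ps ∧ famVerts Ps = A} :=
      Set.Finite.subset (Finset.finite_toSet _) (fun A hA => hA.1)
    have h1 : G.card ≤ Set.ncard {A : Finset (Fin n) | A ∈ l.toFinset.filter (fun A => ∃ S ∈ 𝒮, Disjoint A S ∧
            A.card = 34 ∧ ∃ Ps : List (List (Fin n)), IsAbsorber H S Ps ∧ famVerts Ps = A) ∧
          Disjoint A S ∧
          ∃ Ps : List (List (Fin n)), IsAbsorber H S Ps ∧ famVerts Ps = A} := by
      rw [← Set.ncard_coe_finset G]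
      exact Set.ncard_le_ncard hGsub hfin
    have h2 : t ≤ Set.ncard {A : Finset (Fin n) | A ∈ l.toFinset.filter (fun A => ∃ S ∈ 𝒮, Disjoint A S ∧
            A.card = 34 ∧ ∃ Ps : List (List (Fin n)), IsAbsorber H S Ps ∧ famVerts Ps = A) ∧
          Disjoint A S ∧
          ∃ Ps : List (List (Fin n)), IsAbsorber H S Ps ∧ famVerts Ps = A} :=
      le_trans (le_of_lt hGcard) h1
    have h3 : (t:ℝ) ≤ (Set.ncard {A : Finset (Fin n) | A ∈ l.toFinset.filter (fun A => ∃ S ∈ 𝒮, Disjoint A S ∧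
            A.card = 34 ∧ ∃ Ps : List (List (Fin n)), IsAbsorber H S Ps ∧ famVerts Ps = A) ∧
          Disjoint A S ∧
          ∃ Ps : List (List (Fin n)), IsAbsorber H S Ps ∧ famVerts Ps = A} : ℝ) := by
      exact_mod_cast h2
    linarith only [h3, ht_ge]
end
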